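/- arXiv:1307.0625 — 2 statements merged into one kernel-verified Lean document; each statement's English description precedes it below -/
import Mathlib

section
/- Let N = 2^e with e ≥ 1, let m be an integer with 5m ≡ 1 (mod N), and set S = L²⁰·R^m·L⁻⁴·R⁻¹ in SL(2,ℤ). Then the element (S·R⁵·L·R⁻¹·L)³·((L·R⁻¹·L)²)⁻¹ lies in Γ(N). -/
open Matrix CongruenceSubgroup

local notation "SL2Z" => Matrix.SpecialLinearGroup (Fin 2) ℤ

/-- The matrix `L = [[1,0],[1,1]]` as an element of `SL(2, ℤ)`. -/
def L : SL2Z := ⟨!![1, 0; 1, 1], by norm_num [Matrix.det_fin_two_of]⟩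

/-- The matrix `R = [[1,1],[0,1]]` as an element of `SL(2, ℤ)`. -/
def R : SL2Z := ⟨!![1, 1; 0, 1], by norm_num [Matrix.det_fin_two_of]⟩

lemma R_eq_T : R = ModularGroup.T := by
  apply Subtype.ext; rfl

lemma R_zpow_coe (n : ℤ) : ((R ^ n : SL2Z) : Matrix (Fin 2) (Fin 2) ℤ) = !![1, n; 0, 1] := by
  rw [R_eq_T, ModularGroup.coe_T_zpow]

lemma L_pow_coe (n : ℕ) : ((L ^ n : SL2Z) : Matrix (Fin 2) (Fin 2) ℤ) = !![1, 0; (n : ℤ), 1] := by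
  induction n with
  | zero => simp [Matrix.one_fin_two]
  | succ k ih =>
    rw [pow_succ, Matrix.SpecialLinearGroup.coe_mul, ih]
    show _ = !![(1 : ℤ), 0; ((k : ℤ) + 1), 1]
    simp [L, Matrix.mul_fin_two]

lemma L_zpow_coe (n : ℤ) : ((L ^ n : SL2Z) : Matrix (Fin 2) (Fin 2) ℤ) = !![1, 0; n, 1] := by
  induction n using Int.rec with
  | ofNat k => rw [Int.ofNat_eq_coe, zpow_natCast, L_pow_coe]
  | negSucc k =>
    have he : ((k : ℤ) + 1) + Int.negSucc k = 0 := by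
      rw [Int.negSucc_eq]; ring
    have h : (L ^ ((k : ℤ) + 1)) * (L ^ (Int.negSucc k)) = 1 := by
      rw [← _root_.zpow_add, he, zpow_zero]
    have h2 : (L ^ (Int.negSucc k) : SL2Z) = (L ^ ((k : ℤ) + 1))⁻¹ :=
      (inv_eq_of_mul_eq_one_right h).symm
    have h3 : ((L ^ ((k : ℤ) + 1) : SL2Z) : Matrix (Fin 2) (Fin 2) ℤ)
        = !![1, 0; (k : ℤ) + 1, 1] := by
      have hh : ((k : ℤ) + 1) = ((k + 1 : ℕ) : ℤ) := by push_cast; ring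
      rw [hh, zpow_natCast, L_pow_coe]
    rw [h2, Matrix.SpecialLinearGroup.SL2_inv_expl]
    ext i j
    fin_cases i <;> fin_cases j <;> simp [h3, Int.negSucc_eq] <;> ring

set_option maxHeartbeats 1000000 in
lemma big_coe (m : ℤ) (S : SL2Z) (hS : S = L ^ 20 * R ^ m * L ^ (-4 : ℤ) * R⁻¹) :
    (((S * R ^ 5 * L * R⁻¹ * L) ^ 3 * ((L * R⁻¹ * L) ^ 2)⁻¹ : SL2Z) : Matrix (Fin 2) (Fin 2) ℤ) =
      !![63375*m^3 - 40300*m^2 + 8450*m - 584, -16900*m^3 + 10465*m^2 - 2132*m + 143;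
         1267500*m^3 - 742625*m^2 + 144300*m - 9295, -338000*m^3 + 192400*m^2 - 36335*m + 2276] := by
  have hLc : (L : Matrix (Fin 2) (Fin 2) ℤ) = !![1, 0; 1, 1] := rfl
  have hRc : (R : Matrix (Fin 2) (Fin 2) ℤ) = !![1, 1; 0, 1] := rfl
  have hLic : ((L⁻¹ : SL2Z) : Matrix (Fin 2) (Fin 2) ℤ) = !![1, 0; -1, 1] := by
    rw [← _root_.zpow_neg_one, L_zpow_coe]
  have hRic : ((R⁻¹ : SL2Z) : Matrix (Fin 2) (Fin 2) ℤ) = !![1, -1; 0, 1] := by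
    rw [← _root_.zpow_neg_one, R_zpow_coe]
  have hR5 : ((R ^ 5 : SL2Z) : Matrix (Fin 2) (Fin 2) ℤ) = !![1, 5; 0, 1] := by
    have : (R ^ 5 : SL2Z) = R ^ ((5 : ℕ) : ℤ) := by norm_cast
    rw [this, R_zpow_coe]; norm_num
  have hL20 : ((L ^ 20 : SL2Z) : Matrix (Fin 2) (Fin 2) ℤ) = !![1, 0; 20, 1] := by
    have : (L ^ 20 : SL2Z) = L ^ ((20 : ℕ) : ℤ) := (zpow_natCast L 20).symm
    rw [this, L_zpow_coe]; norm_num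
  rw [hS]
  simp only [pow_succ, pow_zero, one_mul, _root_.mul_inv_rev, inv_inv]
  simp only [Matrix.SpecialLinearGroup.coe_mul, hL20, hR5, hLc, hRc, hLic, hRic,
    L_zpow_coe, R_zpow_coe]
  ext i j
  fin_cases i <;> fin_cases j <;> simp [Matrix.mul_fin_two] <;> ring

theorem stmt_3 (e : ℕ) (he : 1 ≤ e) (m : ℤ)
    (hm : 5 * m ≡ 1 [ZMOD ((2 : ℤ) ^ e)])
    (S : SL2Z) (hS : S = L ^ 20 * R ^ m * L ^ (-4 : ℤ) * R⁻¹) :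
    (S * R ^ 5 * L * R⁻¹ * L) ^ 3 * ((L * R⁻¹ * L) ^ 2)⁻¹ ∈ Gamma (2 ^ e) := by
  have hco := big_coe m S hS
  obtain ⟨k, hk⟩ := Int.modEq_iff_dvd.mp hm
  have hcast : (((2 : ℕ) ^ e : ℕ) : ℤ) = (2 : ℤ) ^ e := by push_cast; ring
  rw [Gamma_mem]
  rw [hco]
  refine ⟨?_, ?_, ?_, ?_⟩ <;> simp only [Matrix.cons_val', Matrix.cons_val_zero,
    Matrix.cons_val_one, Matrix.head_cons, Matrix.head_fin_const, Matrix.empty_val',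
    Matrix.cons_val_fin_one, Matrix.of_apply]
  · rw [show (1 : ZMod (2 ^ e)) = ((1 : ℤ) : ZMod (2 ^ e)) by norm_num,
      ZMod.intCast_eq_intCast_iff, Int.modEq_iff_dvd, hcast]
    exact ⟨k * (12675*m^2 - 5525*m + 585), by linear_combination (12675*m^2 - 5525*m + 585) * hk⟩
  · rw [ZMod.intCast_zmod_eq_zero_iff_dvd, hcast]
    exact ⟨k * (3380*m^2 - 1417*m + 143), by linear_combination (3380*m^2 - 1417*m + 143) * hk⟩
  · rw [ZMod.intCast_zmod_eq_zero_iff_dvd, hcast]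
    exact ⟨k * (-253500*m^2 + 97825*m - 9295), by linear_combination (-253500*m^2 + 97825*m - 9295) * hk⟩
  · rw [show (1 : ZMod (2 ^ e)) = ((1 : ℤ) : ZMod (2 ^ e)) by norm_num,
      ZMod.intCast_eq_intCast_iff, Int.modEq_iff_dvd, hcast]
    exact ⟨k * (-67600*m^2 + 24960*m - 2275), by linear_combination (-67600*m^2 + 24960*m - 2275) * hk⟩
end

section
/- Let N = e·m where e = 2^f with f ≥ 1 and m is an odd integer with m > 1. Let c be an integer with c ≡ 0 (mod e) and c ≡ 1 (mod m), let x be an integer with 2x ≡ 1 (mod m), and set a = L^c and b = R^c in SL(2,ℤ). Then the element (a·b⁻¹·a)²·((b²·a^(−x))³)⁻¹ lies in Γ(N). -/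
open Matrix CongruenceSubgroup

local notation "SL2Z" => Matrix.SpecialLinearGroup (Fin 2) ℤ

lemma coe_L_zpow (n : ℤ) : (L ^ n).1 = !![1, 0; n, 1] := by
  induction n using Int.induction_on with
  | zero => simp [Matrix.one_fin_two]
  | succ k ih =>
    rw [_root_.zpow_add_one, Matrix.SpecialLinearGroup.coe_mul, ih, L]
    norm_num [Matrix.mul_fin_two]
  | pred k ih =>
    rw [_root_.zpow_sub_one, Matrix.SpecialLinearGroup.coe_mul, ih]
    have hLi : (L⁻¹).1 = !![1, 0; -1, 1] := by
      rw [Matrix.SpecialLinearGroup.coe_inv, L]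
      simp [Matrix.adjugate_fin_two_of]
    rw [hLi]
    norm_num [Matrix.mul_fin_two]
    ring_nf

lemma coe_R_zpow (n : ℤ) : (R ^ n).1 = !![1, n; 0, 1] := by
  have : R = ModularGroup.T := by
    ext i j; rw [R, ModularGroup.T]
  rw [this, ModularGroup.coe_T_zpow]

lemma crt2 (f m : ℕ) (hmodd : Odd m) (z t : ℤ)
    (h1 : (z : ZMod (2 ^ f)) = (t : ZMod (2 ^ f)))
    (h2 : (z : ZMod m) = (t : ZMod m)) :
    (z : ZMod (2 ^ f * m)) = (t : ZMod (2 ^ f * m)) := by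
  rw [ZMod.intCast_eq_intCast_iff] at h1 h2 ⊢
  have hco : ((2 ^ f : ℕ) : ℤ).natAbs.Coprime ((m : ℕ) : ℤ).natAbs := by
    simpa [Int.natAbs_pow] using Nat.Coprime.pow_left f hmodd.coprime_two_left
  have := (Int.modEq_and_modEq_iff_modEq_mul hco).mp ⟨h1, h2⟩
  simpa using this

theorem stmt_7 (f : ℕ) (hf : 1 ≤ f) (m : ℕ) (hmodd : Odd m) (hm1 : 1 < m)
    (c : ℤ) (hc0 : c ≡ 0 [ZMOD ((2 : ℤ) ^ f)]) (hc1 : c ≡ 1 [ZMOD (m : ℤ)])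
    (x : ℤ) (hx : 2 * x ≡ 1 [ZMOD (m : ℤ)])
    (a b : SL2Z) (ha : a = L ^ c) (hb : b = R ^ c) :
    (a * b⁻¹ * a) ^ 2 * ((b ^ 2 * a ^ (-x)) ^ 3)⁻¹ ∈ Gamma (2 ^ f * m) := by
  -- transfer the congruence hypotheses to `ZMod`
  have hc0' : (c : ZMod (2 ^ f)) = 0 := by
    rw [show ((2:ℤ) ^ f) = ((2 ^ f : ℕ) : ℤ) by push_cast; ring] at hc0
    simpa using (ZMod.intCast_eq_intCast_iff _ _ _).mpr hc0
  have hc1' : (c : ZMod m) = 1 := by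
    simpa using (ZMod.intCast_eq_intCast_iff _ _ _).mpr hc1
  have hx' : 2 * (x : ZMod m) = 1 := by
    have := (ZMod.intCast_eq_intCast_iff _ _ _).mpr hx
    push_cast at this; simpa using this
  have key : (a * b⁻¹ * a) ^ 2 * ((b ^ 2 * a ^ (-x)) ^ 3)⁻¹ =
      L ^ c * R ^ (-c) * L ^ (2*c) * R ^ (-c) * L ^ (c + c*x) * R ^ (-(2*c)) *
        L ^ (c*x) * R ^ (-(2*c)) * L ^ (c*x) * R ^ (-(2*c)) := by
    subst ha hb
    simp only [pow_two, pow_three, _root_.mul_inv_rev]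
    group
  rw [key, Gamma_mem]
  have hM : (L ^ c * R ^ (-c) * L ^ (2*c) * R ^ (-c) * L ^ (c + c*x) * R ^ (-(2*c)) *
        L ^ (c*x) * R ^ (-(2*c)) * L ^ (c*x) * R ^ (-(2*c))).1 =
      !![1 - 4*c^2 - 12*c^2*x + 2*c^4 + 30*c^4*x + 20*c^4*x^2 - 12*c^6*x - 32*c^6*x^2
           - 8*c^6*x^3 + 8*c^8*x^2 + 8*c^8*x^3,
         -8*c + 26*c^3 + 40*c^3*x - 12*c^5 - 88*c^5*x - 48*c^5*x^2 + 32*c^7*x + 72*c^7*x^2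
           + 16*c^7*x^3 - 16*c^9*x^2 - 16*c^9*x^3;
         4*c + 3*c*x - 6*c^3 - 36*c^3*x - 8*c^3*x^2 + 2*c^5 + 42*c^5*x + 48*c^5*x^2
           + 4*c^5*x^3 - 12*c^7*x - 40*c^7*x^2 - 16*c^7*x^3 + 8*c^9*x^2 + 8*c^9*x^3,
         1 - 28*c^2 - 12*c^2*x + 38*c^4 + 112*c^4*x + 20*c^4*x^2 - 12*c^6 - 120*c^6*x
           - 112*c^6*x^2 - 8*c^6*x^3 + 32*c^8*x + 88*c^8*x^2 + 32*c^8*x^3 - 16*c^10*x^2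
           - 16*c^10*x^3] := by
    simp only [Matrix.SpecialLinearGroup.coe_mul, coe_L_zpow, coe_R_zpow, Matrix.mul_fin_two]
    ext i j
    fin_cases i <;> fin_cases j <;> simp <;> ring
  rw [hM]
  refine ⟨?_, ?_, ?_, ?_⟩ <;>
    simp only [Matrix.cons_val', Matrix.cons_val_zero, Matrix.cons_val_one, Matrix.head_cons,
      Matrix.head_fin_const, Matrix.empty_val', Matrix.cons_val_fin_one, Matrix.of_apply]
  · rw [show (1 : ZMod (2 ^ f * m)) = ((1 : ℤ) : ZMod (2 ^ f * m)) from (Int.cast_one).symm]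
    apply crt2 f m hmodd
    · push_cast; rw [hc0']; ring
    · push_cast; rw [hc1']; linear_combination (2 - 2 * (x : ZMod m)) * hx'
  · rw [show (0 : ZMod (2 ^ f * m)) = ((0 : ℤ) : ZMod (2 ^ f * m)) from (Int.cast_zero).symm]
    apply crt2 f m hmodd
    · push_cast; rw [hc0']; ring
    · push_cast; rw [hc1']; linear_combination (4 * (x : ZMod m) - 6) * hx'
  · rw [show (0 : ZMod (2 ^ f * m)) = ((0 : ℤ) : ZMod (2 ^ f * m)) from (Int.cast_zero).symm]
    apply crt2 f m hmodd
    · push_cast; rw [hc0']; ring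
    · push_cast; rw [hc1']; linear_combination (3 * (x : ZMod m) - 2 * (x : ZMod m) ^ 2) * hx'
  · rw [show (1 : ZMod (2 ^ f * m)) = ((1 : ℤ) : ZMod (2 ^ f * m)) from (Int.cast_one).symm]
    apply crt2 f m hmodd
    · push_cast; rw [hc0']; ring
    · push_cast; rw [hc1']; linear_combination (4 * (x : ZMod m) ^ 2 - 8 * (x : ZMod m) + 2) * hx'
end
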